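/- Let A be a subset of ℂ that is countable and dense in ℂ. Then there exists an entire function f : ℂ → ℂ which is not a polynomial such that f^(s)(α) ∈ A for every α ∈ A and every natural number s ≥ 0. -/

import Mathlib

open Polynomial Finset Metric Filter

noncomputable section

namespace Stmt11

/-- the point associated to index `n` -/
def pt (e : ℕ → ℂ) (n : ℕ) : ℂ := e n.unpair.1

/-- the basic polynomials of the series -/
def Qp (e : ℕ → ℂ) (n : ℕ) : Polynomial ℂ :=
  ∏ k ∈ Finset.range n, (X - C (pt e k))

def Dv (e : ℕ → ℂ) (n : ℕ) : ℂ :=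
  (derivative^[n.unpair.2] (Qp e n)).eval (pt e n)

def eps (e : ℕ → ℂ) (n : ℕ) : ℝ :=
  (1/2 : ℝ) ^ n / (((n : ℝ)+1) ^ n * ∏ k ∈ Finset.range n, (1 + ‖pt e k‖))

lemma eps_pos (e : ℕ → ℂ) (n : ℕ) : 0 < eps e n := by
  unfold eps
  have h1 : (0:ℝ) < ∏ k ∈ Finset.range n, (1 + ‖pt e k‖) :=
    Finset.prod_pos fun k _ => by positivity
  positivity

open scoped Classical in
def pick (A : Set ℂ) (w : ℂ) (r : ℝ) : ℂ :=
  if h : ∃ v, v ∈ A ∧ v ≠ 0 ∧ dist v w < r then h.choose else 0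

lemma pick_spec {A : Set ℂ} (hAd : Dense A) (w : ℂ) {r : ℝ} (hr : 0 < r) :
    pick A w r ∈ A ∧ pick A w r ≠ 0 ∧ dist (pick A w r) w < r := by
  have hex : ∃ v, v ∈ A ∧ v ≠ 0 ∧ dist v w < r := by
    obtain ⟨x, hx0, hxb⟩ : ∃ x, x ≠ 0 ∧ x ∈ Metric.ball w r := by
      have hmem : ∀ t : ℝ, 0 ≤ t → t < r → w + (t:ℂ) ∈ Metric.ball w r := by
        intro t ht htr
        simp only [Metric.mem_ball, dist_eq_norm, add_sub_cancel_left]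
        rw [Complex.norm_real, Real.norm_eq_abs, abs_of_nonneg ht]
        exact htr
      rcases eq_or_ne (w + ((r/2 : ℝ) : ℂ)) 0 with h | h
      · refine ⟨w + ((r/4 : ℝ) : ℂ), ?_, hmem _ (by positivity) (by linarith)⟩
        intro h0
        have h1 : ((r/2 : ℝ) : ℂ) - ((r/4 : ℝ) : ℂ) = 0 := by
          have := h.trans h0.symm
          linear_combination this
        have h2 : (r : ℂ) = 0 := by push_cast at h1; linear_combination 4 * h1
        exact hr.ne' (by exact_mod_cast h2)
      · exact ⟨w + ((r/2 : ℝ) : ℂ), h, hmem _ (by positivity) (by linarith)⟩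
    obtain ⟨v, hvA, hv⟩ := hAd.exists_mem_open
      (isOpen_ball.sdiff isClosed_singleton) ⟨x, hxb, hx0⟩
    exact ⟨v, hvA, hv.2, Metric.mem_ball.mp hv.1⟩
  unfold pick
  rw [dif_pos hex]
  exact hex.choose_spec

def prev (e : ℕ → ℂ) (g : ℕ → ℂ) (n : ℕ) : ℂ :=
  ∑ k ∈ Finset.range n, g k * (derivative^[n.unpair.2] (Qp e k)).eval (pt e n)

def newval (A : Set ℂ) (e : ℕ → ℂ) (g : ℕ → ℂ) (n : ℕ) : ℂ :=
  (pick A (prev e g n) (eps e n * ‖Dv e n‖) - prev e g n) / Dv e n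

def cseq (A : Set ℂ) (e : ℕ → ℂ) : ℕ → ℕ → ℂ
  | 0 => fun _ => 0
  | n+1 => Function.update (cseq A e n) n (newval A e (cseq A e n) n)

def cf (A : Set ℂ) (e : ℕ → ℂ) (n : ℕ) : ℂ := cseq A e (n+1) n

lemma cseq_stable (A : Set ℂ) (e : ℕ → ℂ) :
    ∀ m k, k < m → cseq A e m k = cf A e k := by
  intro m
  induction m with
  | zero => exact fun k hk => absurd hk (Nat.not_lt_zero k)
  | succ m ih =>
    intro k hk
    rcases Nat.lt_succ_iff_lt_or_eq.mp hk with h | rfl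
    · show Function.update (cseq A e m) m (newval A e (cseq A e m) m) k = _
      rw [Function.update_of_ne h.ne, ih k h]
    · rfl

lemma prev_congr (e : ℕ → ℂ) {g₁ g₂ : ℕ → ℂ} (n : ℕ) (h : ∀ k < n, g₁ k = g₂ k) :
    prev e g₁ n = prev e g₂ n := by
  unfold prev
  exact Finset.sum_congr rfl fun k hk => by
    rw [h k (Finset.mem_range.mp hk)]

lemma cf_eq (A : Set ℂ) (e : ℕ → ℂ) (n : ℕ) :
    cf A e n = newval A e (cf A e) n := by
  have : cf A e n = newval A e (cseq A e n) n := by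
    show Function.update (cseq A e n) n (newval A e (cseq A e n) n) n = _
    rw [Function.update_self]
  rw [this]
  unfold newval
  rw [prev_congr e n (fun k hk => cseq_stable A e n k hk)]



lemma deriv_shift (a : ℂ) (s : ℕ) (R : ℂ[X]) :
    derivative ((X - C a)^(s+1) * R)
      = (X - C a)^s * (C ((s:ℂ)+1) * R + (X - C a) * derivative R) := by
  rw [derivative_mul, derivative_pow, derivative_sub, derivative_X, derivative_C]
  simp only [Nat.add_sub_cancel, sub_zero, mul_one]
  push_cast
  ring

lemma eval_it1 (a : ℂ) : ∀ (s : ℕ) (R : ℂ[X]),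
    (derivative^[s] ((X - C a)^s * R)).eval a = (s.factorial : ℂ) * R.eval a := by
  intro s
  induction s with
  | zero => intro R; simp
  | succ s ih =>
    intro R
    rw [Function.iterate_succ_apply, deriv_shift, ih]
    simp only [eval_add, eval_mul, eval_C, eval_sub, eval_X, sub_self, zero_mul, add_zero]
    rw [Nat.factorial_succ]
    push_cast
    ring

lemma eval_it2 (a : ℂ) : ∀ (s : ℕ) (q : ℂ[X]), (X - C a)^(s+1) ∣ q →
    (derivative^[s] q).eval a = 0 := by
  intro s
  induction s with
  | zero =>
    rintro q ⟨r, rfl⟩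
    simp
  | succ s ih =>
    rintro q ⟨r, rfl⟩
    rw [Function.iterate_succ_apply, deriv_shift]
    exact ih _ (Dvd.intro _ rfl)

lemma iteratedDeriv_eval : ∀ (s : ℕ) (p : ℂ[X]),
    iteratedDeriv s (fun z => p.eval z) = fun z => (derivative^[s] p).eval z := by
  intro s
  induction s with
  | zero => intro p; simp
  | succ s ih =>
    intro p
    rw [iteratedDeriv_succ', Function.iterate_succ_apply]
    rw [← ih (derivative p)]
    have h : (deriv fun z => p.eval z) = fun z => (derivative p).eval z :=
      funext fun z => Polynomial.deriv p
    rw [h]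

lemma it_deriv_sum (c : ℕ → ℂ) (q : ℕ → ℂ[X]) (N : ℕ) : ∀ s : ℕ,
    derivative^[s] (∑ k ∈ Finset.range N, C (c k) * q k)
      = ∑ k ∈ Finset.range N, C (c k) * derivative^[s] (q k) := by
  intro s
  induction s with
  | zero => simp
  | succ s ih =>
    rw [Function.iterate_succ_apply', ih, derivative_sum]
    exact Finset.sum_congr rfl fun k _ => by
      rw [derivative_C_mul, Function.iterate_succ_apply']

lemma pair_le_pair_right (i : ℕ) {a b : ℕ} (h : a ≤ b) : Nat.pair i a ≤ Nat.pair i b := by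
  rcases h.lt_or_eq with h | rfl
  · exact (Nat.pair_lt_pair_right i h).le
  · exact le_rfl

lemma pair_inj (i : ℕ) : Function.Injective (fun t => Nat.pair i t) := by
  intro a b h
  have := congrArg Nat.unpair h
  simpa [Nat.unpair_pair] using this

lemma filter_eq {e : ℕ → ℂ} (he : Function.Injective e) (i s : ℕ) :
    ((Finset.range (Nat.pair i s)).filter (fun k => pt e k = e i))
      = (Finset.range s).image (fun t => Nat.pair i t) := by
  ext k
  simp only [Finset.mem_filter, Finset.mem_range, Finset.mem_image]
  constructor
  · rintro ⟨hk, hek⟩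
    have hki : k.unpair.1 = i := he hek
    refine ⟨k.unpair.2, ?_, by rw [← hki]; exact Nat.pair_unpair k⟩
    by_contra hge
    push_neg at hge
    have : Nat.pair i s ≤ k := by
      calc Nat.pair i s ≤ Nat.pair i k.unpair.2 := pair_le_pair_right i hge
        _ = k := by rw [← hki]; exact Nat.pair_unpair k
    omega
  · rintro ⟨t, ht, rfl⟩
    exact ⟨Nat.pair_lt_pair_right i ht, by simp [pt, Nat.unpair_pair]⟩

lemma Qp_eq {e : ℕ → ℂ} (he : Function.Injective e) (i s : ℕ) :
    Qp e (Nat.pair i s) = (X - C (e i))^s *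
      ∏ k ∈ (Finset.range (Nat.pair i s)).filter (fun k => ¬ pt e k = e i),
        (X - C (pt e k)) := by
  unfold Qp
  rw [← Finset.prod_filter_mul_prod_filter_not (Finset.range (Nat.pair i s))
    (fun k => pt e k = e i)]
  congr 1
  rw [show ∀ S : Finset ℕ, (∀ k ∈ S, pt e k = e i) →
      ∏ k ∈ S, (X - C (pt e k)) = (X - C (e i)) ^ S.card from
      fun S hS => by rw [Finset.prod_congr rfl fun k hk => by rw [hS k hk],
        Finset.prod_const]]
  · rw [filter_eq he i s, Finset.card_image_of_injective _ (pair_inj i),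
      Finset.card_range]
  · intro k hk
    exact (Finset.mem_filter.mp hk).2

lemma Dv_ne {e : ℕ → ℂ} (he : Function.Injective e) (i s : ℕ) :
    Dv e (Nat.pair i s) ≠ 0 := by
  unfold Dv
  rw [Nat.unpair_pair]
  show (derivative^[s] (Qp e (Nat.pair i s))).eval (pt e (Nat.pair i s)) ≠ 0
  have hpt : pt e (Nat.pair i s) = e i := by simp [pt, Nat.unpair_pair]
  rw [hpt, Qp_eq he i s, eval_it1 _ _]
  apply mul_ne_zero
  · exact_mod_cast s.factorial_ne_zero
  · rw [eval_prod]
    rw [Finset.prod_ne_zero_iff]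
    intro k hk
    have hk' := (Finset.mem_filter.mp hk).2
    simp only [eval_sub, eval_X, eval_C]
    exact sub_ne_zero.mpr (Ne.symm hk')

lemma eval_vanish (e : ℕ → ℂ) (i s m : ℕ) (hm : Nat.pair i s < m) :
    (derivative^[s] (Qp e m)).eval (e i) = 0 := by
  apply eval_it2 _ _
  have hsub : (Finset.range (s+1)).image (fun t => Nat.pair i t) ⊆ Finset.range m := by
    intro k hk
    simp only [Finset.mem_image, Finset.mem_range] at hk ⊢
    obtain ⟨t, ht, rfl⟩ := hk
    calc Nat.pair i t ≤ Nat.pair i s := pair_le_pair_right i (Nat.lt_succ_iff.mp ht)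
      _ < m := hm
  have hdvd := Finset.prod_dvd_prod_of_subset _ _ (fun k => X - C (pt e k)) hsub
  rw [Finset.prod_image (fun a _ b _ h => pair_inj i h)] at hdvd
  have : ∏ t ∈ Finset.range (s+1), (X - C (pt e (Nat.pair i t)))
      = (X - C (e i)) ^ (s+1) := by
    have h2 : ∀ t ∈ Finset.range (s+1), (X - C (pt e (Nat.pair i t))) = X - C (e i) :=
      fun t _ => by simp [pt, Nat.unpair_pair]
    rw [Finset.prod_congr rfl h2, Finset.prod_const, Finset.card_range]
  rw [this] at hdvd
  exact hdvd


lemma main_construction {A : Set ℂ} (hAd : Dense A) {e : ℕ → ℂ}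
    (he : Function.Injective e) :
    ∃ f : ℂ → ℂ, Differentiable ℂ f ∧
      ∀ i s : ℕ, iteratedDeriv s f (e i) ∈ A ∧ iteratedDeriv s f (e i) ≠ 0 := by
  set c := cf A e with hc
  have hDv : ∀ n, Dv e n ≠ 0 := fun n => by
    have := Dv_ne he n.unpair.1 n.unpair.2
    rwa [Nat.pair_unpair] at this
  have hr : ∀ n, 0 < eps e n * ‖Dv e n‖ :=
    fun n => mul_pos (eps_pos e n) (norm_pos_iff.mpr (hDv n))
  have hcb : ∀ n, ‖c n‖ ≤ eps e n := by
    intro n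
    rw [hc, cf_eq A e n]
    unfold newval
    rw [norm_div, div_le_iff₀ (norm_pos_iff.mpr (hDv n))]
    have h := (pick_spec hAd (prev e (cf A e) n) (hr n)).2.2
    rw [dist_eq_norm] at h
    exact h.le
  have hval : ∀ n, c n * Dv e n + prev e c n
      = pick A (prev e c n) (eps e n * ‖Dv e n‖) := by
    intro n
    rw [hc, cf_eq A e n]
    unfold newval
    rw [div_mul_cancel₀ _ (hDv n), sub_add_cancel]
  set F : ℕ → ℂ → ℂ := fun N z => ∑ k ∈ Finset.range N, c k * (Qp e k).eval z with hF
  set f : ℂ → ℂ := fun z => ∑' k, c k * (Qp e k).eval z with hf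
  have hFpoly : ∀ N s, iteratedDeriv s (F N)
      = fun z => ∑ k ∈ Finset.range N, c k * (derivative^[s] (Qp e k)).eval z := by
    intro N s
    have h1 : F N = fun z => (∑ k ∈ Finset.range N, C (c k) * Qp e k).eval z := by
      funext z; simp [hF, eval_finset_sum]
    rw [h1, iteratedDeriv_eval, it_deriv_sum]
    funext z
    simp [eval_finset_sum]
  have hFdiff : ∀ N s, Differentiable ℂ (iteratedDeriv s (F N)) := by
    intro N s
    rw [hFpoly]
    apply Differentiable.fun_sum
    intro k _
    exact ((derivative^[s] (Qp e k)).differentiable).const_mul _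
  -- term bound
  have hterm : ∀ (k : ℕ) (z : ℂ), ‖c k * (Qp e k).eval z‖
      ≤ (1/2:ℝ)^k * ((1+‖z‖)/((k:ℝ)+1))^k := by
    intro k z
    have hP : (0:ℝ) < ∏ j ∈ Finset.range k, (1 + ‖pt e j‖) :=
      Finset.prod_pos fun j _ => by positivity
    have h1 : ‖(Qp e k).eval z‖
        ≤ (1+‖z‖)^k * ∏ j ∈ Finset.range k, (1 + ‖pt e j‖) := by
      unfold Qp
      rw [eval_prod, norm_prod]
      calc ∏ j ∈ Finset.range k, ‖(X - C (pt e j)).eval z‖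
          ≤ ∏ j ∈ Finset.range k, ((1+‖z‖) * (1+‖pt e j‖)) := by
            apply Finset.prod_le_prod (fun j _ => norm_nonneg _)
            intro j _
            simp only [eval_sub, eval_X, eval_C]
            calc ‖z - pt e j‖ ≤ ‖z‖ + ‖pt e j‖ := norm_sub_le _ _
              _ ≤ (1+‖z‖)*(1+‖pt e j‖) := by
                  nlinarith [norm_nonneg z, norm_nonneg (pt e j)]
        _ = (1+‖z‖)^k * ∏ j ∈ Finset.range k, (1 + ‖pt e j‖) := by
            rw [Finset.prod_mul_distrib, Finset.prod_const, Finset.card_range]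
    calc ‖c k * (Qp e k).eval z‖ = ‖c k‖ * ‖(Qp e k).eval z‖ := norm_mul _ _
      _ ≤ eps e k * ((1+‖z‖)^k * ∏ j ∈ Finset.range k, (1 + ‖pt e j‖)) :=
          mul_le_mul (hcb k) h1 (norm_nonneg _) (eps_pos e k).le
      _ = (1/2:ℝ)^k * ((1+‖z‖)/((k:ℝ)+1))^k := by
          unfold eps
          rw [div_pow]
          have hk : ((k:ℝ)+1)^k ≠ 0 := by positivity
          field_simp
          have hk1 : (1 + (k:ℝ)) ≠ 0 := by positivity
          rw [← mul_pow]
          congr 1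
          field_simp
  -- summability of the majorant on a ball of radius R
  have hsum : ∀ R : ℝ, 0 ≤ R →
      Summable (fun k : ℕ => (1/2:ℝ)^k * ((1+R)/((k:ℝ)+1))^k) := by
    intro R hR
    set N := ⌈R⌉₊ with hN
    rw [← summable_nat_add_iff N]
    apply Summable.of_nonneg_of_le (fun k => by positivity) (fun k => ?_)
      (summable_geometric_of_lt_one (by norm_num) (by norm_num) :
        Summable fun k : ℕ => (1/2:ℝ)^k)
    have h1 : ((1+R)/(((k+N : ℕ):ℝ)+1))^(k+N) ≤ 1 := by
      apply pow_le_one₀ (by positivity)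
      rw [div_le_one (by positivity)]
      have h2 : R ≤ (N:ℝ) := Nat.le_ceil R
      push_cast
      linarith
    calc (1/2:ℝ)^(k+N) * ((1+R)/(((k+N : ℕ):ℝ)+1))^(k+N)
        ≤ (1/2:ℝ)^(k+N) * 1 := by
          apply mul_le_mul_of_nonneg_left h1 (by positivity)
      _ ≤ (1/2:ℝ)^k := by
          rw [mul_one]
          exact pow_le_pow_of_le_one (by norm_num) (by norm_num) (Nat.le_add_right _ _)
  -- uniform convergence on closed balls
  have hball : ∀ R : ℝ, 0 ≤ R →
      TendstoUniformlyOn F f atTop (Metric.closedBall 0 R) := by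
    intro R hR
    apply tendstoUniformlyOn_tsum_nat (hsum R hR)
    intro k z hz
    refine (hterm k z).trans ?_
    have hz' : ‖z‖ ≤ R := by
      rwa [Metric.mem_closedBall, dist_zero_right] at hz
    have h0 : (1+‖z‖)/((k:ℝ)+1) ≤ (1+R)/((k:ℝ)+1) := by
      apply div_le_div_of_nonneg_right ?_ (by positivity)
      linarith
    exact mul_le_mul_of_nonneg_left (pow_le_pow_left₀ (by positivity) h0 k) (by positivity)
  have hlu : TendstoLocallyUniformly F f atTop := by
    rw [tendstoLocallyUniformly_iff_forall_isCompact]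
    intro K hK
    obtain ⟨R, hKR⟩ := hK.isBounded.subset_closedBall 0
    exact (hball (max R 0) (le_max_right _ _)).mono
      (hKR.trans (Metric.closedBall_subset_closedBall (le_max_left _ _)))
  -- derivative tower
  have main : ∀ s, TendstoLocallyUniformly (fun N => iteratedDeriv s (F N))
      (iteratedDeriv s f) atTop ∧ Differentiable ℂ (iteratedDeriv s f) := by
    intro s
    induction s with
    | zero =>
      refine ⟨by simpa [iteratedDeriv_zero] using hlu, ?_⟩
      have hd := (tendstoLocallyUniformlyOn_univ.mpr hlu).differentiableOn
        (Eventually.of_forall fun N => by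
          simpa [iteratedDeriv_zero] using (hFdiff N 0).differentiableOn) isOpen_univ
      rw [iteratedDeriv_zero]
      exact differentiableOn_univ.mp hd
    | succ s ih =>
      obtain ⟨hconv, hdiff⟩ := ih
      have hder := (tendstoLocallyUniformlyOn_univ.mpr hconv).deriv
        (Eventually.of_forall fun N => (hFdiff N s).differentiableOn) isOpen_univ
      have hconv' : TendstoLocallyUniformly (fun N => iteratedDeriv (s+1) (F N))
          (iteratedDeriv (s+1) f) atTop := by
        have h := tendstoLocallyUniformlyOn_univ.mp hder
        have heq : (fun N => iteratedDeriv (s+1) (F N))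
            = deriv ∘ (fun N => iteratedDeriv s (F N)) := by
          funext N
          rw [Function.comp_apply, iteratedDeriv_succ]
        rw [heq, iteratedDeriv_succ]
        exact h
      refine ⟨hconv', ?_⟩
      have hd2 := (tendstoLocallyUniformlyOn_univ.mpr hconv').differentiableOn
        (Eventually.of_forall fun N => (hFdiff N (s+1)).differentiableOn) isOpen_univ
      exact differentiableOn_univ.mp hd2
  -- evaluation of derivatives at the points e i
  have hvalue : ∀ i s : ℕ, iteratedDeriv s f (e i)
      = pick A (prev e c (Nat.pair i s)) (eps e (Nat.pair i s) * ‖Dv e (Nat.pair i s)‖) := by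
    intro i s
    set n := Nat.pair i s with hn
    have hpt : pt e n = e i := by simp [pt, hn, Nat.unpair_pair]
    have hs2 : n.unpair.2 = s := by simp [hn, Nat.unpair_pair]
    have h1 : Tendsto (fun N => iteratedDeriv s (F N) (e i)) atTop
        (nhds (iteratedDeriv s f (e i))) :=
      ((tendstoLocallyUniformlyOn_univ.mpr (main s).1).tendsto_at (Set.mem_univ (e i)))
    have h2 : ∀ N, n + 1 ≤ N → iteratedDeriv s (F N) (e i)
        = pick A (prev e c n) (eps e n * ‖Dv e n‖) := by
      intro N hN
      rw [hFpoly]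
      show (∑ k ∈ Finset.range N, c k * (derivative^[s] (Qp e k)).eval (e i))
        = pick A (prev e c n) (eps e n * ‖Dv e n‖)
      have hsplit : Finset.range N = Finset.range (n+1) ∪ Finset.Ico (n+1) N := by
        rw [Finset.range_eq_Ico, ← Finset.Ico_union_Ico_eq_Ico (Nat.zero_le _) hN, Finset.range_eq_Ico]
      rw [hsplit, Finset.sum_union (by
        simp only [Finset.disjoint_left, Finset.mem_range, Finset.mem_Ico]
        intro a ha hb
        omega)]
      have hz : ∑ k ∈ Finset.Ico (n+1) N, c k * (derivative^[s] (Qp e k)).eval (e i) = 0 := by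
        apply Finset.sum_eq_zero
        intro k hk
        have hk' : n < k := by
          have := (Finset.mem_Ico.mp hk).1
          omega
        rw [eval_vanish e i s k (hn ▸ hk')]
        ring
      rw [hz, add_zero, Finset.sum_range_succ]
      have hprev : ∑ k ∈ Finset.range n, c k * (derivative^[s] (Qp e k)).eval (e i)
          = prev e c n := by
        unfold prev
        rw [hs2, hpt]
      have hDn : (derivative^[s] (Qp e n)).eval (e i) = Dv e n := by
        unfold Dv
        rw [hs2, hpt]
      rw [hprev, hDn, add_comm]
      exact hval n
    have h3 : Tendsto (fun N => iteratedDeriv s (F N) (e i)) atTop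
        (nhds (pick A (prev e c n) (eps e n * ‖Dv e n‖))) := by
      apply Tendsto.congr' _ tendsto_const_nhds
      filter_upwards [eventually_ge_atTop (n+1)] with N hN
      exact (h2 N hN).symm
    exact tendsto_nhds_unique h1 h3
  refine ⟨f, by simpa [iteratedDeriv_zero] using (main 0).2, ?_⟩
  intro i s
  rw [hvalue i s]
  exact ⟨(pick_spec hAd _ (hr _)).1, (pick_spec hAd _ (hr _)).2.1⟩

end Stmt11

theorem stmt_11 (A : Set ℂ) (hA : A.Countable) (hAd : Dense A) :
    ∃ f : ℂ → ℂ, Differentiable ℂ f ∧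
      (∀ p : Polynomial ℂ, f ≠ fun z => p.eval z) ∧
      ∀ α ∈ A, ∀ s : ℕ, iteratedDeriv s f α ∈ A := by
  have hInf : A.Infinite := by
    intro hfin
    have : A = Set.univ := by
      rw [← hAd.closure_eq, hfin.isClosed.closure_eq]
    exact Set.infinite_univ (this ▸ hfin)
  have hcnt : Countable A := hA.to_subtype
  have hinf : Infinite A := hInf.to_subtype
  obtain ⟨eqv⟩ : Nonempty (ℕ ≃ A) := nonempty_equiv_of_countable
  set e : ℕ → ℂ := fun n => ((eqv n : A) : ℂ) with hee
  have he : Function.Injective e := fun a b h =>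
    eqv.injective (Subtype.coe_injective h)
  obtain ⟨f, hfdiff, hfval⟩ := Stmt11.main_construction hAd he
  refine ⟨f, hfdiff, ?_, ?_⟩
  · intro p hp
    apply (hfval 0 (p.natDegree + 1)).2
    rw [hp, Stmt11.iteratedDeriv_eval]
    show (Polynomial.derivative^[p.natDegree + 1] p).eval (e 0) = 0
    rw [Polynomial.iterate_derivative_eq_zero (Nat.lt_succ_self _)]
    simp
  · intro α hα s
    obtain ⟨i, hi⟩ : ∃ i, e i = α := ⟨eqv.symm ⟨α, hα⟩, by simp [hee]⟩
    rw [← hi]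
    exact (hfval i s).1
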